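/- Let m ≥ 2, let s_1,…,s_m be nonnegative integers with total t = s_1+⋯+s_m, and let l_j, u_j be integers with 0 ≤ l_j ≤ u_j ≤ s_j and l_j + u_j = s_j for each j (symmetric core constraints). For a nonnegative integer n let N(n) = ∑ ∏_{j=1}^m C(s_j, x_j), the sum over all x ∈ ℕ^m with x_1+⋯+x_m = n and l_j ≤ x_j ≤ u_j for all j. Then for any two sample sizes n, n' with 0 ≤ n' < n and 2n ≤ t, one has N(n)·C(t, n') ≥ N(n')·C(t, n); equivalently, P_n[X ∈ B] ≥ P_{n'}[X ∈ B]. -/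

import Mathlib

open Polynomial Finset

namespace SymCoreAux

variable {ι : Type*} [DecidableEq ι]

/-- Truncated binomial polynomial for one color. -/
noncomputable def pp (s l : ℕ) : Polynomial ℕ :=
  ∑ v ∈ Finset.Icc l (s - l), Polynomial.monomial v (s.choose v)

/-- The "down" polynomial for one color. -/
noncomputable def dd (s l : ℕ) : Polynomial ℕ :=
  ∑ v ∈ Finset.Icc l (s - l), Polynomial.monomial v ((s - v) * s.choose v)

/-- Product over the active colors. -/
noncomputable def FF (sf lf : ι → ℕ) (A : Finset ι) : Polynomial ℕ :=
  ∏ i ∈ A, pp (sf i) (lf i)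

lemma coeff_pp (s l k : ℕ) :
    (pp s l).coeff k = if k ∈ Finset.Icc l (s - l) then s.choose k else 0 := by
  rw [pp, Polynomial.finset_sum_coeff]
  simp only [Polynomial.coeff_monomial]
  exact Finset.sum_ite_eq' _ _ _

lemma natDegree_pp_le (s l : ℕ) : (pp s l).natDegree ≤ s := by
  refine Polynomial.natDegree_le_iff_coeff_eq_zero.mpr fun k hk => ?_
  rw [coeff_pp, if_neg]
  simp only [Finset.mem_Icc]
  omega

lemma reflect_pp (s l : ℕ) (h : 2 * l ≤ s) : (pp s l).reflect s = pp s l := by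
  ext k
  rw [Polynomial.coeff_reflect]
  by_cases hk : k ≤ s
  · rw [Polynomial.revAt_le hk, coeff_pp, coeff_pp]
    have hmem : (s - k ∈ Finset.Icc l (s - l)) ↔ (k ∈ Finset.Icc l (s - l)) := by
      simp only [Finset.mem_Icc]; omega
    rw [if_congr hmem rfl rfl]
    split_ifs with h2
    · exact Nat.choose_symm hk
    · rfl
  · have : Polynomial.revAt s k = k := Polynomial.revAt_eq_self_of_lt (by omega)
    rw [this]

lemma reflect_FF (sf lf : ι → ℕ) :
    ∀ A : Finset ι, (∀ i ∈ A, 2 * lf i ≤ sf i) →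
      (∏ i ∈ A, pp (sf i) (lf i)).reflect (∑ i ∈ A, sf i) = ∏ i ∈ A, pp (sf i) (lf i) := by
  intro A
  induction A using Finset.induction with
  | empty =>
    intro _
    simp [Polynomial.reflect_one]
  | insert a A ha ih =>
    intro h
    rw [Finset.prod_insert ha, Finset.sum_insert ha,
      Polynomial.reflect_mul _ _ (natDegree_pp_le _ _)
        ((Polynomial.natDegree_prod_le _ _).trans
          (Finset.sum_le_sum fun i _ => natDegree_pp_le (sf i) (lf i))),
      reflect_pp _ _ (h a (Finset.mem_insert_self a A)),
      ih fun i hi => h i (Finset.mem_insert_of_mem hi)]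

lemma coeff_FF_symm (sf lf : ι → ℕ) (A : Finset ι) (h : ∀ i ∈ A, 2 * lf i ≤ sf i)
    (r : ℕ) (hr : r ≤ ∑ i ∈ A, sf i) :
    (FF sf lf A).coeff (∑ i ∈ A, sf i - r) = (FF sf lf A).coeff r := by
  have h' : (FF sf lf A).reflect (∑ i ∈ A, sf i) = FF sf lf A := reflect_FF sf lf A h
  conv_rhs => rw [← h']
  rw [Polynomial.coeff_reflect, Polynomial.revAt_le hr]

lemma coeff_monomial_mul' (g : Polynomial ℕ) (v c r : ℕ) :
    (Polynomial.monomial v c * g).coeff r = if v ≤ r then c * g.coeff (r - v) else 0 := by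
  split_ifs with h
  · conv_lhs => rw [show r = (r - v) + v by omega]
    rw [mul_comm, Polynomial.coeff_mul_monomial, mul_comm]
  · rw [mul_comm, ← Polynomial.C_mul_X_pow_eq_monomial, ← mul_assoc,
      Polynomial.coeff_mul_X_pow', if_neg h]

lemma dd_add_X_deriv (s l : ℕ) :
    dd s l + Polynomial.X * Polynomial.derivative (pp s l) = s • pp s l := by
  rw [pp, dd, map_sum Polynomial.derivative, Finset.mul_sum, Finset.smul_sum,
    ← Finset.sum_add_distrib]
  refine Finset.sum_congr rfl fun v hv => ?_
  have hvs : v ≤ s := by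
    simp only [Finset.mem_Icc] at hv; omega
  rw [Polynomial.derivative_monomial, Polynomial.smul_monomial]
  cases v with
  | zero =>
    simp
  | succ w =>
    rw [← Polynomial.monomial_one_one_eq_X, Polynomial.monomial_mul_monomial]
    have h1 : (1 : ℕ) + (w + 1 - 1) = w + 1 := by omega
    rw [h1]
    rw [← map_add]
    congr 1
    simp only [smul_eq_mul, one_mul, Nat.cast_id]
    zify [hvs]
    ring

/-- Finset version of `derivative_prod`. -/
lemma derivative_finset_prod (A : Finset ι) (f : ι → Polynomial ℕ) :
    Polynomial.derivative (∏ i ∈ A, f i)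
      = ∑ i ∈ A, (∏ j ∈ A.erase i, f j) * Polynomial.derivative (f i) := by
  induction A using Finset.induction with
  | empty => simp
  | insert a A ha ih =>
    rw [Finset.prod_insert ha, Polynomial.derivative_mul, Finset.sum_insert ha,
      Finset.erase_insert ha, ih, Finset.mul_sum]
    congr 1
    · exact mul_comm _ _
    · refine Finset.sum_congr rfl fun i hi => ?_
      have hia : i ≠ a := fun h => ha (h ▸ hi)
      rw [Finset.erase_insert_of_ne hia.symm,
        Finset.prod_insert (fun h => ha (Finset.mem_of_mem_erase h)), mul_assoc]

lemma D_identity (sf lf : ι → ℕ) (A : Finset ι) :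
    (∑ j ∈ A, dd (sf j) (lf j) * FF sf lf (A.erase j))
      + Polynomial.X * Polynomial.derivative (FF sf lf A)
      = (∑ i ∈ A, sf i) • FF sf lf A := by
  simp only [FF]
  rw [derivative_finset_prod, Finset.mul_sum, ← Finset.sum_add_distrib, Finset.sum_smul]
  refine Finset.sum_congr rfl fun j hj => ?_
  calc dd (sf j) (lf j) * ∏ i ∈ A.erase j, pp (sf i) (lf i)
      + Polynomial.X * ((∏ i ∈ A.erase j, pp (sf i) (lf i)) * Polynomial.derivative (pp (sf j) (lf j)))
      = (dd (sf j) (lf j) + Polynomial.X * Polynomial.derivative (pp (sf j) (lf j)))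
        * ∏ i ∈ A.erase j, pp (sf i) (lf i) := by ring
    _ = (sf j • pp (sf j) (lf j)) * ∏ i ∈ A.erase j, pp (sf i) (lf i) := by
        rw [dd_add_X_deriv]
    _ = sf j • ∏ i ∈ A, pp (sf i) (lf i) := by
        rw [smul_mul_assoc, Finset.mul_prod_erase A (fun i => pp (sf i) (lf i)) hj]

/-- The crucial per-color exchange inequality. -/
lemma percolor (s l : ℕ) (hls : 2 * l ≤ s) (g : Polynomial ℕ) (tg : ℕ)
    (hg : ∀ a b : ℕ, b ≤ a → a + b ≤ tg → g.coeff b ≤ g.coeff a)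
    (r : ℕ) (hr : 2 * r + 1 ≤ s + tg) :
    (dd s l * g).coeff r ≤ (Polynomial.derivative (pp s l) * g).coeff r := by
  classical
  set L : ℕ → ℕ := fun w => if w ≤ r then (s - w) * s.choose w * g.coeff (r - w) else 0 with hL
  have hLHS : (dd s l * g).coeff r = ∑ v ∈ Finset.Icc l (s - l), L v := by
    rw [dd, Finset.sum_mul, Polynomial.finset_sum_coeff]
    refine Finset.sum_congr rfl fun v hv => ?_
    rw [coeff_monomial_mul', hL]
  have hRHS : (Polynomial.derivative (pp s l) * g).coeff r
      = ∑ v ∈ Finset.Icc l (s - l),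
          (if v - 1 ≤ r then s.choose v * v * g.coeff (r - (v - 1)) else 0) := by
    rw [pp, map_sum Polynomial.derivative, Finset.sum_mul, Polynomial.finset_sum_coeff]
    refine Finset.sum_congr rfl fun v hv => ?_
    rw [Polynomial.derivative_monomial, coeff_monomial_mul']
    split_ifs with h
    · push_cast; ring
    · rfl
  have hRL : ∀ v, 1 ≤ v → v ≤ s →
      (if v - 1 ≤ r then s.choose v * v * g.coeff (r - (v - 1)) else 0) = L (v - 1) := by
    intro v hv1 hvs
    have hch : s.choose v * v = (s - (v - 1)) * s.choose (v - 1) := by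
      have h0 := Nat.choose_succ_right_eq s (v - 1)
      have hv : v - 1 + 1 = v := by omega
      rw [hv] at h0
      rw [h0, mul_comm]
    simp only [hL]
    split_ifs with h
    · rw [hch]
    · rfl
  rw [hLHS, hRHS]
  rcases Nat.eq_zero_or_pos l with hl0 | hlpos
  · -- l = 0 : the two sums are equal
    subst hl0
    rcases Nat.eq_zero_or_pos s with hs0 | hspos
    · subst hs0
      simp [hL]
    · have hsplitL : ∑ v ∈ Finset.Icc 0 (s - 0), L v
          = (∑ v ∈ Finset.Icc 0 (s - 1), L v) + L s := by
        have h' := Finset.sum_Icc_succ_top (a := 0) (b := s - 1) (by omega) L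
        rw [show s - 1 + 1 = s by omega] at h'
        rw [show s - 0 = s by omega]
        exact h'
      have hLs : L s = 0 := by
        simp only [hL]; split_ifs with h
        · simp [Nat.sub_self]
        · rfl
      have hsplitR : ∑ v ∈ Finset.Icc 0 (s - 0),
            (if v - 1 ≤ r then s.choose v * v * g.coeff (r - (v - 1)) else 0)
          = ∑ v ∈ Finset.Icc 0 (s - 1), L v := by
        have h0 : s - 0 = (s - 1) + 1 := by omega
        have hshift : Finset.Icc (0:ℕ) (s - 0) = insert 0 (Finset.Icc 1 (s - 0)) := by
          ext x; simp only [Finset.mem_Icc, Finset.mem_insert]; omega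
        rw [hshift, Finset.sum_insert (by simp)]
        have h00 : (if (0:ℕ) - 1 ≤ r then s.choose 0 * 0 * g.coeff (r - (0 - 1)) else 0) = 0 := by
          split_ifs <;> simp
        rw [h00, zero_add]
        have himg : Finset.Icc (1:ℕ) (s - 0) = Finset.image (· + 1) (Finset.Icc 0 (s - 1)) := by
          rw [Finset.image_add_right_Icc]
          congr 1 <;> omega
        rw [himg, Finset.sum_image (by intro x _ y _ h; simp only at h; omega)]
        refine Finset.sum_congr rfl fun w hw => ?_
        simp only [Finset.mem_Icc] at hw
        have h1 := hRL (w + 1) (by omega) (by omega)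
        rw [h1, Nat.add_sub_cancel]
      rw [hsplitL, hsplitR, hLs, add_zero]
  · -- l ≥ 1
    have hls' : l ≤ s - l := by omega
    have hsl1 : 1 ≤ s - l := by omega
    have hsplitL : ∑ v ∈ Finset.Icc l (s - l), L v
        = (∑ v ∈ Finset.Icc l (s - l - 1), L v) + L (s - l) := by
      have h' := Finset.sum_Icc_succ_top (a := l) (b := s - l - 1) (by omega) L
      rw [show s - l - 1 + 1 = s - l by omega] at h'
      exact h'
    have hsplitR : ∑ v ∈ Finset.Icc l (s - l),
          (if v - 1 ≤ r then s.choose v * v * g.coeff (r - (v - 1)) else 0)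
        = L (l - 1) + ∑ v ∈ Finset.Icc l (s - l - 1), L v := by
      have hstep : ∀ v ∈ Finset.Icc l (s - l),
          (if v - 1 ≤ r then s.choose v * v * g.coeff (r - (v - 1)) else 0) = L (v - 1) := by
        intro v hv
        simp only [Finset.mem_Icc] at hv
        exact hRL v (by omega) (by omega)
      rw [Finset.sum_congr rfl hstep]
      have himg : Finset.Icc l (s - l) = Finset.image (· + 1) (Finset.Icc (l - 1) (s - l - 1)) := by
        rw [Finset.image_add_right_Icc]
        congr 1 <;> omega
      rw [himg, Finset.sum_image (by intro x _ y _ h; simp only at h; omega)]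
      have hre : ∀ w ∈ Finset.Icc (l - 1) (s - l - 1), L (w + 1 - 1) = L w :=
        fun w _ => by rw [Nat.add_sub_cancel]
      rw [Finset.sum_congr rfl hre]
      have hins : Finset.Icc (l - 1) (s - l - 1) = insert (l - 1) (Finset.Icc l (s - l - 1)) := by
        ext x; simp only [Finset.mem_Icc, Finset.mem_insert]; omega
      rw [hins, Finset.sum_insert (by simp only [Finset.mem_Icc]; omega)]
    rw [hsplitL, hsplitR, add_comm (L (l - 1)) _]
    refine Nat.add_le_add_left ?_ _
    -- key comparison : L (s - l) ≤ L (l - 1)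
    simp only [hL]
    split_ifs with h1 h2
    · -- s - l ≤ r and l - 1 ≤ r
      have e1 : s - (s - l) = l := by omega
      have e2 : s.choose (s - l) = s.choose l := Nat.choose_symm (by omega)
      have e3 : (s - (l - 1)) * s.choose (l - 1) = l * s.choose l := by
        have h0 := Nat.choose_succ_right_eq s (l - 1)
        have hv : l - 1 + 1 = l := by omega
        rw [hv] at h0
        calc (s - (l - 1)) * s.choose (l - 1) = s.choose (l - 1) * (s - (l - 1)) := mul_comm _ _
          _ = s.choose l * l := h0.symm
          _ = l * s.choose l := mul_comm _ _
      rw [e1, e2, e3]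
      refine Nat.mul_le_mul_left _ ?_
      exact hg (r - (l - 1)) (r - (s - l)) (by omega) (by omega)
    · omega
    · exact Nat.zero_le _
    · exact Nat.zero_le _

lemma step_ineq (sf lf : ι → ℕ) (A : Finset ι) (hA : ∀ i ∈ A, 2 * lf i ≤ sf i)
    (hsub : ∀ j ∈ A, ∀ a b : ℕ, b ≤ a → a + b ≤ ∑ i ∈ A.erase j, sf i →
      (FF sf lf (A.erase j)).coeff b ≤ (FF sf lf (A.erase j)).coeff a)
    (r : ℕ) (hr : 2 * (r + 1) ≤ ∑ i ∈ A, sf i) :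
    (∑ i ∈ A, sf i - r) * (FF sf lf A).coeff r ≤ (r + 1) * (FF sf lf A).coeff (r + 1) := by
  set t := ∑ i ∈ A, sf i with ht
  have hD : (∑ j ∈ A, dd (sf j) (lf j) * FF sf lf (A.erase j)).coeff r
      ≤ (Polynomial.derivative (FF sf lf A)).coeff r := by
    rw [FF, derivative_finset_prod, Polynomial.finset_sum_coeff, Polynomial.finset_sum_coeff]
    refine Finset.sum_le_sum fun j hj => ?_
    have hts : sf j + ∑ i ∈ A.erase j, sf i = t := by
      rw [ht, Finset.add_sum_erase _ _ hj]
    have h1 : (dd (sf j) (lf j) * FF sf lf (A.erase j)).coeff r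
        ≤ (Polynomial.derivative (pp (sf j) (lf j)) * FF sf lf (A.erase j)).coeff r := by
      refine percolor (sf j) (lf j) (hA j hj) _ (∑ i ∈ A.erase j, sf i)
        (hsub j hj) r (by omega)
    calc (dd (sf j) (lf j) * FF sf lf (A.erase j)).coeff r
        ≤ (Polynomial.derivative (pp (sf j) (lf j)) * FF sf lf (A.erase j)).coeff r := h1
      _ = ((∏ i ∈ A.erase j, pp (sf i) (lf i)) * Polynomial.derivative (pp (sf j) (lf j))).coeff r := by
          rw [mul_comm]; rfl
  have hid : (∑ j ∈ A, dd (sf j) (lf j) * FF sf lf (A.erase j)).coeff r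
      + r * (FF sf lf A).coeff r = t * (FF sf lf A).coeff r := by
    have := congrArg (fun p => Polynomial.coeff p r) (D_identity sf lf A)
    simp only [Polynomial.coeff_add, Polynomial.coeff_smul, smul_eq_mul] at this
    rw [← ht] at this
    have hX : (Polynomial.X * Polynomial.derivative (FF sf lf A)).coeff r
        = r * (FF sf lf A).coeff r := by
      cases r with
      | zero => simp [Polynomial.mul_coeff_zero]
      | succ k =>
        rw [Polynomial.coeff_X_mul, Polynomial.coeff_derivative]
        push_cast
        ring
    rw [hX] at this
    exact this
  have hderiv : (Polynomial.derivative (FF sf lf A)).coeff r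
      = (FF sf lf A).coeff (r + 1) * (r + 1) := by
    rw [Polynomial.coeff_derivative]
    push_cast
    ring
  have hrt : r ≤ t := by omega
  have key : t * (FF sf lf A).coeff r
      ≤ (r + 1) * (FF sf lf A).coeff (r + 1) + r * (FF sf lf A).coeff r := by
    rw [← hid]
    refine Nat.add_le_add_right ?_ _
    rw [mul_comm (r+1) _, ← hderiv]
    exact hD
  have expand : (t - r) * (FF sf lf A).coeff r + r * (FF sf lf A).coeff r
      = t * (FF sf lf A).coeff r := by
    rw [← Nat.add_mul]
    congr 1
    omega
  linarith

/-- Abstract ratio lemma. -/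
lemma ratio_abs (t : ℕ) (c : ℕ → ℕ)
    (hstep : ∀ r : ℕ, 2 * (r + 1) ≤ t → (t - r) * c r ≤ (r + 1) * c (r + 1)) :
    ∀ a, 2 * a ≤ t → ∀ b, b ≤ a → c b * t.choose a ≤ c a * t.choose b := by
  intro a
  induction a with
  | zero =>
    intro _ b hb
    interval_cases b
    exact le_refl _
  | succ a ih =>
    intro ha2 b hb
    rcases Nat.lt_or_ge b (a + 1) with hb' | hb'
    · have h1 := ih (by omega) b (by omega)
      have h2 := hstep a ha2
      have h3 : t.choose (a + 1) * (a + 1) = t.choose a * (t - a) :=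
        Nat.choose_succ_right_eq t a
      have hmain : (a + 1) * (c b * t.choose (a + 1)) ≤ (a + 1) * (c (a + 1) * t.choose b) := by
        calc (a + 1) * (c b * t.choose (a + 1))
            = c b * (t.choose (a + 1) * (a + 1)) := by ring
          _ = c b * (t.choose a * (t - a)) := by rw [h3]
          _ = (c b * t.choose a) * (t - a) := by ring
          _ ≤ (c a * t.choose b) * (t - a) := Nat.mul_le_mul_right _ h1
          _ = ((t - a) * c a) * t.choose b := by ring
          _ ≤ ((a + 1) * c (a + 1)) * t.choose b := Nat.mul_le_mul_right _ h2
          _ = (a + 1) * (c (a + 1) * t.choose b) := by ring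
      exact Nat.le_of_mul_le_mul_left hmain (by omega)
    · have : b = a + 1 := by omega
      subst this
      exact le_refl _

lemma choose_mono_left (t i : ℕ) : ∀ d, 2 * (i + d) ≤ t → t.choose i ≤ t.choose (i + d) := by
  intro d
  induction d with
  | zero => intro _; exact le_refl _
  | succ d ih =>
    intro h
    calc t.choose i ≤ t.choose (i + d) := ih (by omega)
      _ ≤ t.choose (i + d + 1) := Nat.choose_le_succ_of_lt_half_left (by omega)
      _ = t.choose (i + (d + 1)) := by rw [add_assoc]

/-- Abstract monotonicity from symmetry + step. -/
lemma mono_abs (t : ℕ) (c : ℕ → ℕ)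
    (hsymm : ∀ r, r ≤ t → c (t - r) = c r)
    (hstep : ∀ r : ℕ, 2 * (r + 1) ≤ t → (t - r) * c r ≤ (r + 1) * c (r + 1)) :
    ∀ a b, b ≤ a → a + b ≤ t → c b ≤ c a := by
  have key : ∀ a, 2 * a ≤ t → ∀ b, b ≤ a → c b ≤ c a := by
    intro a ha b hb
    have h1 := ratio_abs t c hstep a ha b hb
    have h2 : t.choose b ≤ t.choose a := by
      obtain ⟨d, rfl⟩ : ∃ d, a = b + d := ⟨a - b, by omega⟩
      exact choose_mono_left t b d (by omega)
    have h3 : 0 < t.choose a := Nat.choose_pos (by omega)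
    have : c b * t.choose a ≤ c a * t.choose a :=
      h1.trans (Nat.mul_le_mul_left _ h2)
    exact Nat.le_of_mul_le_mul_right this h3
  intro a b hba hab
  rcases le_or_gt (2 * a) t with ha | ha
  · exact key a ha b hba
  · have hat : a ≤ t := by omega
    have hsa : c (t - a) = c a := hsymm a hat
    have := key (t - a) (by omega) b (by omega)
    rw [hsa] at this
    exact this

lemma monoAll (sf lf : ι → ℕ) :
    ∀ A : Finset ι, (∀ i ∈ A, 2 * lf i ≤ sf i) →
      ∀ a b : ℕ, b ≤ a → a + b ≤ ∑ i ∈ A, sf i →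
        (FF sf lf A).coeff b ≤ (FF sf lf A).coeff a := by
  intro A
  induction A using Finset.strongInduction with
  | _ A ih =>
    intro hA
    exact mono_abs _ _ (coeff_FF_symm sf lf A hA)
      (step_ineq sf lf A hA fun j hj => ih (A.erase j) (Finset.erase_ssubset hj)
        (fun i hi => hA i (Finset.mem_of_mem_erase hi)))

lemma prod_monomial (A : Finset ι) (v c : ι → ℕ) :
    ∏ i ∈ A, Polynomial.monomial (v i) (c i)
      = Polynomial.monomial (∑ i ∈ A, v i) (∏ i ∈ A, c i) := by
  induction A using Finset.induction with
  | empty => simp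
  | insert a A ha ih =>
    rw [Finset.prod_insert ha, Finset.sum_insert ha, Finset.prod_insert ha, ih,
      Polynomial.monomial_mul_monomial]

lemma coeff_FF_univ (m : ℕ) (s l : Fin m → ℕ) (r : ℕ) :
    (FF s l Finset.univ).coeff r
      = ∑ x ∈ (Fintype.piFinset fun j => Finset.Icc (l j) (s j - l j)).filter
          (fun x => ∑ j, x j = r), ∏ j, (s j).choose (x j) := by
  have hexp : FF s l Finset.univ
      = ∑ x ∈ Fintype.piFinset (fun j => Finset.Icc (l j) (s j - l j)),
          Polynomial.monomial (∑ j, x j) (∏ j, (s j).choose (x j)) := by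
    rw [FF]
    simp only [pp]
    rw [Finset.prod_univ_sum]
    exact Finset.sum_congr rfl fun x _ => prod_monomial _ _ _
  rw [hexp, Polynomial.finset_sum_coeff]
  simp only [Polynomial.coeff_monomial]
  rw [Finset.sum_filter]

end SymCoreAux

/-- Stochastic ordering of symmetric core event probabilities for the multiple
hypergeometric distribution: for `0 ≤ n' < n ≤ ⌊t/2⌋` (here `2n ≤ t`),
`P_n[X ∈ B] ≥ P_{n'}[X ∈ B]`, stated in cross-multiplied form
`N(n)·C(t,n') ≥ N(n')·C(t,n)`. -/
theorem symmetric_core_ordering_lower (m : ℕ) (hm : 2 ≤ m) (s l u : Fin m → ℕ)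
    (hlu : ∀ j, l j ≤ u j) (hus : ∀ j, u j ≤ s j)
    (hsym : ∀ j, l j + u j = s j)
    (t : ℕ) (ht : t = ∑ j, s j)
    (N : ℕ → ℕ)
    (hN : ∀ r, N r = ∑ x ∈ (Fintype.piFinset fun j => Finset.Icc (l j) (u j)).filter
        (fun x => ∑ j, x j = r), ∏ j, (s j).choose (x j))
    (n n' : ℕ) (h1 : n' < n) (h2 : 2 * n ≤ t) :
    N n' * t.choose n ≤ N n * t.choose n' := by
  classical
  have hu : ∀ j, u j = s j - l j := fun j => by have h := hsym j; omega
  have hA : ∀ i ∈ (Finset.univ : Finset (Fin m)), 2 * l i ≤ s i := fun i _ => by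
    have h := hsym i; have h2 := hlu i; omega
  have hNF : ∀ r, N r = (SymCoreAux.FF s l Finset.univ).coeff r := by
    intro r
    have hIcc : (fun j => Finset.Icc (l j) (u j)) = fun j => Finset.Icc (l j) (s j - l j) := by
      funext j; rw [hu j]
    rw [hN r, SymCoreAux.coeff_FF_univ, hIcc]
  have htA : t = ∑ i ∈ (Finset.univ : Finset (Fin m)), s i := ht
  have hstep := SymCoreAux.step_ineq s l Finset.univ hA
    (fun j hj => SymCoreAux.monoAll s l (Finset.univ.erase j)
      (fun i hi => hA i (Finset.mem_of_mem_erase hi)))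
  have hratio := SymCoreAux.ratio_abs t (fun r => (SymCoreAux.FF s l Finset.univ).coeff r)
    (fun r hr => by rw [htA]; exact hstep r (by omega)) n h2 n' (le_of_lt h1)
  rw [hNF n, hNF n']
  exact hratio
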